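/- arXiv:math/9806152 — 2 statements merged into one kernel-verified Lean document; each statement's English description precedes it below -/
import Mathlib

section
/- Let α, β be real numbers such that 1, α, β are linearly independent over ℚ. Then the skew product map T : ℝ³/ℤ³ → ℝ³/ℤ³, T(t, y₁, y₂) = (t + α, y₁ + t, y₂ + β), is ergodic with respect to Haar (Lebesgue) measure on the 3-torus. -/
open MeasureTheory Set Function Submodule
open scoped ComplexConjugate Real

noncomputable section SkewAux

local notation "U" => UnitAddCircle

lemma volume_eq_haar : (volume : Measure U) = AddCircle.haarAddCircle := by
  rw [AddCircle.volume_eq_smul_haarAddCircle]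
  simp

instance : IsProbabilityMeasure (volume : Measure U) := by
  rw [volume_eq_haar]; infer_instance

lemma integral_fourier (n : ℤ) :
    ∫ x : U, fourier n x ∂volume = if n = 0 then 1 else 0 := by
  split_ifs with h
  · subst h
    simp [fourier_zero]
  · exact integral_eq_zero_of_add_right_eq_neg
      (fourier_add_half_inv_index h (by norm_num : (0:ℝ) < 1))

/-- Characters of the 3-torus. -/
def chi (w : ℤ × ℤ × ℤ) : C(U × U × U, ℂ) :=
  ⟨fun p => fourier w.1 p.1 * fourier w.2.1 p.2.1 * fourier w.2.2 p.2.2, by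
    refine Continuous.mul (Continuous.mul ?_ ?_) ?_
    · exact (map_continuous (fourier w.1)).comp continuous_fst
    · exact (map_continuous (fourier w.2.1)).comp (continuous_fst.comp continuous_snd)
    · exact (map_continuous (fourier w.2.2)).comp (continuous_snd.comp continuous_snd)⟩

lemma chi_apply (w : ℤ × ℤ × ℤ) (p : U × U × U) :
    chi w p = fourier w.1 p.1 * fourier w.2.1 p.2.1 * fourier w.2.2 p.2.2 := rfl

lemma chi_mul (v w : ℤ × ℤ × ℤ) : chi v * chi w = chi (v + w) := by
  ext p
  simp only [ContinuousMap.mul_apply, chi_apply, Prod.fst_add, Prod.snd_add, fourier_add]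
  ring

lemma chi_zero : chi 0 = 1 := by
  ext p
  simp [chi_apply, fourier_zero]

lemma chi_star (w : ℤ × ℤ × ℤ) : star (chi w) = chi (-w) := by
  ext p
  simp only [ContinuousMap.star_apply, chi_apply, Prod.fst_neg, Prod.snd_neg, fourier_neg]
  simp [RCLike.star_def, map_mul]

lemma integral_chi (w : ℤ × ℤ × ℤ) :
    ∫ p : U × U × U, chi w p ∂volume = if w = 0 then 1 else 0 := by
  have h1 : ∫ p : U × U × U, chi w p ∂volume
      = (∫ x : U, fourier w.1 x ∂volume)
        * ∫ y : U × U, fourier w.2.1 y.1 * fourier w.2.2 y.2 ∂volume := by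
    rw [show (volume : Measure (U × U × U)) = (volume : Measure U).prod volume from rfl]
    simp_rw [chi_apply, mul_assoc]
    exact integral_prod_mul (fun x => fourier w.1 x)
      (fun y : U × U => fourier w.2.1 y.1 * fourier w.2.2 y.2)
  have h2 : ∫ y : U × U, fourier w.2.1 y.1 * fourier w.2.2 y.2 ∂volume
      = (∫ x : U, fourier w.2.1 x ∂volume) * ∫ x : U, fourier w.2.2 x ∂volume := by
    rw [show (volume : Measure (U × U)) = (volume : Measure U).prod volume from rfl]
    exact integral_prod_mul _ _
  rw [h1, h2, integral_fourier, integral_fourier, integral_fourier]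
  rcases eq_or_ne w 0 with rfl | hw
  · simp
  · rw [if_neg hw]
    by_cases h1 : w.1 = 0
    · by_cases h2 : w.2.1 = 0
      · have h3 : w.2.2 ≠ 0 := by
          intro h3; exact hw (by ext <;> simp [h1, h2, h3])
        simp [h3]
      · simp [h2]
    · simp [h1]

abbrev chiLp (w : ℤ × ℤ × ℤ) : Lp ℂ 2 (volume : Measure (U × U × U)) :=
  ContinuousMap.toLp (E := ℂ) 2 volume ℂ (chi w)

local notation "⟪" x ", " y "⟫" => @inner ℂ _ _ x y

lemma inner_chiLp (v w : ℤ × ℤ × ℤ) :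
    ⟪chiLp v, chiLp w⟫ = if v = w then (1 : ℂ) else 0 := by
  rw [ContinuousMap.inner_toLp (volume : Measure (U × U × U)) (chi v) (chi w)]
  have : ∀ x : U × U × U, conj (chi v x) * chi w x = chi (w - v) x := by
    intro x
    have := congrArg (fun f : C(U × U × U, ℂ) => f x) (chi_mul (-v) w)
    simp only [ContinuousMap.mul_apply] at this
    rw [← chi_star, ContinuousMap.star_apply, RCLike.star_def] at this
    rw [this]
    congr 1
    abel_nf
  simp_rw [fun x => (mul_comm (chi w x) (conj (chi v x))).trans (this x)]
  rw [integral_chi]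
  simp [sub_eq_zero, eq_comm]

lemma orthonormal_chiLp : Orthonormal ℂ chiLp := by
  rw [orthonormal_iff_ite]
  intro v w
  rw [inner_chiLp]

/-- The star subalgebra generated by the characters. -/
def chiAlgebra : StarSubalgebra ℂ C(U × U × U, ℂ) where
  toSubalgebra := Algebra.adjoin ℂ (range chi)
  star_mem' := by
    show Algebra.adjoin ℂ (range chi) ≤ star (Algebra.adjoin ℂ (range chi))
    refine Algebra.adjoin_le ?_
    rintro - ⟨w, rfl⟩
    exact Algebra.subset_adjoin ⟨-w, (chi_star w).symm ▸ (star_star (chi (-w)) ▸ rfl)⟩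

lemma chiAlgebra_coe :
    Subalgebra.toSubmodule chiAlgebra.toSubalgebra = span ℂ (range chi) := by
  apply Algebra.adjoin_eq_span_of_subset
  refine Subset.trans ?_ Submodule.subset_span
  intro x hx
  refine Submonoid.closure_induction (fun _ => id) ⟨0, chi_zero⟩ ?_ hx
  rintro - - - - ⟨v, rfl⟩ ⟨w, rfl⟩
  exact ⟨v + w, (chi_mul v w).symm⟩

lemma chiAlgebra_separatesPoints : chiAlgebra.SeparatesPoints := by
  intro x y hxy
  have hinj := AddCircle.injective_toCircle (one_ne_zero : (1:ℝ) ≠ 0)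
  have key : ∀ w : ℤ × ℤ × ℤ, chi w ∈ chiAlgebra := fun w => Algebra.subset_adjoin ⟨w, rfl⟩
  have hne : x.1 ≠ y.1 ∨ x.2.1 ≠ y.2.1 ∨ x.2.2 ≠ y.2.2 := by
    by_contra hc
    push_neg at hc
    exact hxy (by ext <;> simp [hc.1, hc.2.1, hc.2.2])
  rcases hne with hne | hne | hne
  · refine ⟨_, ⟨chi (1, 0, 0), key _, rfl⟩, ?_⟩
    simp only [chi_apply, fourier_zero, mul_one, fourier_one]
    exact fun hc => hne (hinj (Circle.coe_injective hc))
  · refine ⟨_, ⟨chi (0, 1, 0), key _, rfl⟩, ?_⟩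
    simp only [chi_apply, fourier_zero, mul_one, one_mul, fourier_one]
    exact fun hc => hne (hinj (Circle.coe_injective hc))
  · refine ⟨_, ⟨chi (0, 0, 1), key _, rfl⟩, ?_⟩
    simp only [chi_apply, fourier_zero, mul_one, one_mul, fourier_one]
    exact fun hc => hne (hinj (Circle.coe_injective hc))

lemma span_chi_closure_eq_top :
    (span ℂ (range chi)).topologicalClosure = ⊤ := by
  rw [← chiAlgebra_coe]
  exact congr_arg (Subalgebra.toSubmodule <| StarSubalgebra.toSubalgebra ·)
    (ContinuousMap.starSubalgebra_topologicalClosure_eq_top_of_separatesPoints chiAlgebra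
      chiAlgebra_separatesPoints)

lemma span_chiLp_closure_eq_top :
    (span ℂ (range chiLp)).topologicalClosure = ⊤ := by
  convert (ContinuousMap.toLp_denseRange ℂ (volume : Measure (U × U × U)) ℂ
    (by norm_num : (2 : ENNReal) ≠ ⊤)).topologicalClosure_map_submodule span_chi_closure_eq_top
  · rfl
  erw [map_span, range_comp]
  simp only [ContinuousLinearMap.coe_coe]

lemma eq_zero_of_inner_chiLp_eq_zero (g : Lp ℂ 2 (volume : Measure (U × U × U)))
    (hg : ∀ w, ⟪chiLp w, g⟫ = 0) : g = 0 := by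
  have hmem : g ∈ (span ℂ (range chiLp))ᗮ := by
    rw [Submodule.mem_orthogonal]
    intro u hu
    induction hu using Submodule.span_induction with
    | mem u hu => obtain ⟨w, rfl⟩ := hu; exact hg w
    | zero => simp
    | add u v _ _ hu hv => rw [inner_add_left, hu, hv, add_zero]
    | smul c u _ hu => rw [inner_smul_left, hu, mul_zero]
  rwa [Submodule.topologicalClosure_eq_top_iff.mp span_chiLp_closure_eq_top,
    Submodule.mem_bot] at hmem

lemma fourier_arg_add {T : ℝ} (n : ℤ) (x y : AddCircle T) :
    fourier n (x + y) = fourier n x * fourier n y := by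
  simp only [fourier_apply, smul_add, AddCircle.toCircle_add, Circle.coe_mul]

lemma norm_fourier (n : ℤ) (x : U) : ‖fourier n x‖ = 1 := by
  rw [fourier_apply]
  exact Circle.norm_coe _

lemma measurePreserving_T (α β : ℝ) :
    MeasurePreserving
      (fun p : U × U × U => ((p.1 + (α : U), p.2.1 + p.1, p.2.2 + (β : U))))
      volume volume := by
  have h1 : MeasurePreserving (fun t : U => t + (α : U)) volume volume :=
    measurePreserving_add_right volume _
  have hgm : Measurable (uncurry fun (a : U) (c : U × U) => (c.1 + a, c.2 + (β : U))) :=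
    ((measurable_snd.fst.add measurable_fst).prodMk (measurable_snd.snd.add_const _))
  have hg : ∀ᵐ a ∂(volume : Measure U),
      Measure.map (fun c : U × U => (c.1 + a, c.2 + (β : U))) volume = volume := by
    filter_upwards with a
    have : MeasurePreserving (fun c : U × U => (c.1 + a, c.2 + (β : U))) volume volume :=
      (measurePreserving_add_right volume a).prod (measurePreserving_add_right volume _)
    exact this.map_eq
  exact MeasurePreserving.skew_product h1 hgm hg

lemma char_ne_one {α β : ℝ} (h : LinearIndependent ℚ ![(1 : ℝ), α, β]) {n p : ℤ}
    (hnp : ¬(n = 0 ∧ p = 0)) : fourier n (α : U) * fourier p (β : U) ≠ 1 := by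
  intro hc
  rw [fourier_coe_apply, fourier_coe_apply, ← Complex.exp_add, Complex.exp_eq_one_iff] at hc
  obtain ⟨k, hk⟩ := hc
  have h2 : (2 * Real.pi : ℂ) * Complex.I ≠ 0 := by
    simp [Real.pi_ne_zero, Complex.I_ne_zero]
  have hk' : (n : ℂ) * α + p * β = k := by
    field_simp at hk
    have : (2 * ↑Real.pi * Complex.I) * ((n : ℂ) * α + p * β)
        = (2 * ↑Real.pi * Complex.I) * k := by
          rw [hk]; push_cast; ring
    exact mul_left_cancel₀ h2 this
  have hr : (n : ℝ) * α + p * β = k := by exact_mod_cast hk'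
  have hsum : ∑ i, (![(-k : ℚ), n, p] i) • (![(1 : ℝ), α, β] i) = 0 := by
    simp [Fin.sum_univ_three, Rat.smul_def]
    linarith [hr]
  have := Fintype.linearIndependent_iff.mp h ![(-k : ℚ), n, p] hsum
  apply hnp
  have h1 := this 1
  have h2 := this 2
  simp at h1 h2
  exact ⟨h1, h2⟩

end SkewAux

/-- The skew product `(t, y₁, y₂) ↦ (t + α, y₁ + t, y₂ + β)` on the 3-torus is
ergodic when `1, α, β` are linearly independent over `ℚ`. -/
theorem skew_product_torus_ergodic (α β : ℝ)
    (h : LinearIndependent ℚ ![(1 : ℝ), α, β]) :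
    Ergodic
      (fun p : UnitAddCircle × UnitAddCircle × UnitAddCircle =>
        ((p.1 + (α : UnitAddCircle), p.2.1 + p.1, p.2.2 + (β : UnitAddCircle))))
      (volume : Measure (UnitAddCircle × UnitAddCircle × UnitAddCircle)) := by
  classical
  set Tm := fun p : UnitAddCircle × UnitAddCircle × UnitAddCircle =>
    ((p.1 + (α : UnitAddCircle), p.2.1 + p.1, p.2.2 + (β : UnitAddCircle))) with hTm
  have hT : MeasurePreserving Tm volume volume := measurePreserving_T α β
  refine ⟨hT, ⟨?_⟩⟩
  intro s hs hinv
  set f : UnitAddCircle × UnitAddCircle × UnitAddCircle → ℂ := s.indicator 1 with hf_def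
  have hf_meas : Measurable f := measurable_const.indicator hs
  have hf_mem : MemLp f 2 volume := MemLp.indicator hs (memLp_const 1)
  set F := hf_mem.toLp f with hF_def
  set c : ℤ × ℤ × ℤ → ℂ := fun w => @inner ℂ _ _ (chiLp w) F with hc_def
  -- Fourier coefficients as integrals
  have hc : ∀ w, c w = ∫ x, conj (chi w x) * f x ∂volume := by
    intro w
    change @inner ℂ _ _ (chiLp w) F = _
    rw [L2.inner_def]
    apply integral_congr_ae
    filter_upwards [(chi w).coeFn_toLp (p := 2) (𝕜 := ℂ) volume, hf_mem.coeFn_toLp]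
      with x h1 h2
    rw [h1, h2, RCLike.inner_apply, mul_comm]
  -- invariance of f
  have hTinv : ∀ x, f (Tm x) = f x := by
    intro x
    have hx : Tm x ∈ s ↔ x ∈ s := by
      constructor
      · intro hx; rwa [← hinv]
      · intro hx; rw [← hinv] at hx; exact hx
    by_cases hxs : x ∈ s
    · rw [hf_def, Set.indicator_of_mem hxs, Set.indicator_of_mem (hx.mpr hxs)]
      rfl
    · rw [hf_def, Set.indicator_of_notMem hxs,
        Set.indicator_of_notMem (fun hc => hxs (hx.mp hc))]
  -- the key relation between Fourier coefficients
  have hrel : ∀ n m p : ℤ, c (n, m, p)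
      = conj (fourier n (α : UnitAddCircle) * fourier p (β : UnitAddCircle))
        * c (n + m, m, p) := by
    intro n m p
    have hpt : ∀ x, conj (chi (n, m, p) (Tm x)) * f (Tm x)
        = conj (fourier n (α : UnitAddCircle) * fourier p (β : UnitAddCircle))
          * (conj (chi (n + m, m, p) x) * f x) := by
      intro x
      have hchi : chi (n, m, p) (Tm x)
          = (fourier n (α : UnitAddCircle) * fourier p (β : UnitAddCircle))
            * chi (n + m, m, p) x := by
        simp only [chi_apply, hTm, fourier_arg_add, fourier_add]
        ring
      rw [hTinv x, hchi, map_mul]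
      ring
    have hsm : AEStronglyMeasurable (fun x => conj (chi (n, m, p) x) * f x)
        (volume : Measure (UnitAddCircle × UnitAddCircle × UnitAddCircle)) := by
      exact (((map_continuous (chi (n, m, p))).star.measurable).mul hf_meas).aestronglyMeasurable
    calc c (n, m, p) = ∫ x, conj (chi (n, m, p) x) * f x ∂volume := hc _
      _ = ∫ x, conj (chi (n, m, p) x) * f x ∂(Measure.map Tm volume) := by rw [hT.map_eq]
      _ = ∫ x, conj (chi (n, m, p) (Tm x)) * f (Tm x) ∂volume := by
          rw [integral_map hT.measurable.aemeasurable (by rwa [hT.map_eq])]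
      _ = conj (fourier n (α : UnitAddCircle) * fourier p (β : UnitAddCircle))
            * ∫ x, conj (chi (n + m, m, p) x) * f x ∂volume := by
          simp_rw [hpt]
          exact integral_const_mul _ _
      _ = _ := by rw [← hc]
  -- coefficients with m = 0 vanish unless n = p = 0
  have hm0 : ∀ n p : ℤ, ¬(n = 0 ∧ p = 0) → c (n, 0, p) = 0 := by
    intro n p hnp
    have hre := hrel n 0 p
    rw [add_zero] at hre
    by_contra hcne
    have h1 : conj (fourier n (α : UnitAddCircle) * fourier p (β : UnitAddCircle)) = 1 := by
      have := mul_right_cancel₀ hcne (by rw [← hre, one_mul] :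
        (1 : ℂ) * c (n, 0, p)
          = conj (fourier n (α : UnitAddCircle) * fourier p (β : UnitAddCircle)) * c (n, 0, p))
      exact this.symm
    have h2 : fourier n (α : UnitAddCircle) * fourier p (β : UnitAddCircle) = 1 := by
      have := congrArg conj h1
      simpa using this
    exact char_ne_one h hnp h2
  -- coefficients with m ≠ 0 vanish by Bessel's inequality
  have hmne : ∀ n m p : ℤ, m ≠ 0 → c (n, m, p) = 0 := by
    intro n m p hm
    have hnorm : ∀ j : ℕ, ‖c (n + (j : ℤ) * m, m, p)‖ = ‖c (n, m, p)‖ := by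
      intro j
      induction j with
      | zero => norm_num
      | succ j ih =>
        have hr := hrel (n + (j : ℤ) * m) m p
        have harg : (n + ((j : ℕ) + 1 : ℕ) * m : ℤ) = (n + (j : ℤ) * m) + m := by
          push_cast; ring
        rw [harg, ← ih, hr, norm_mul, RCLike.norm_conj, norm_mul,
          norm_fourier, norm_fourier, one_mul, one_mul]
    set w : ℕ → ℤ × ℤ × ℤ := fun j => (n + (j : ℤ) * m, m, p) with hw
    have hinj : Function.Injective w := by
      intro a b hab
      rw [hw, Prod.ext_iff] at hab
      have : (a : ℤ) * m = (b : ℤ) * m := add_left_cancel hab.1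
      have := mul_right_cancel₀ hm this
      exact_mod_cast this
    have hsum := (orthonormal_chiLp.comp w hinj).inner_products_summable F
    have hsum' : Summable (fun _ : ℕ => ‖c (n, m, p)‖ ^ 2) := by
      refine hsum.congr fun j => ?_
      simp only [Function.comp_apply]
      rw [show @inner ℂ _ _ (chiLp (w j)) F = c (w j) from rfl, hw]
      rw [hnorm j]
    have h0 : ‖c (n, m, p)‖ ^ 2 = 0 :=
      tendsto_nhds_unique tendsto_const_nhds hsum'.tendsto_atTop_zero
    have := pow_eq_zero_iff (n := 2) (by norm_num) |>.mp h0
    exact norm_eq_zero.mp this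
  -- all nontrivial coefficients vanish
  have hzero : ∀ w : ℤ × ℤ × ℤ, w ≠ 0 → c w = 0 := by
    rintro ⟨n, m, p⟩ hw
    rcases eq_or_ne m 0 with rfl | hm
    · apply hm0
      rintro ⟨rfl, rfl⟩
      exact hw rfl
    · exact hmne n m p hm
  -- hence F is constant
  have hF : F = c 0 • chiLp 0 := by
    have hdiff : F - c 0 • chiLp 0 = 0 := by
      apply eq_zero_of_inner_chiLp_eq_zero
      intro w
      rw [inner_sub_right, inner_smul_right, inner_chiLp]
      rcases eq_or_ne w 0 with rfl | hw
      · simp [hc_def]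
      · rw [if_neg hw, mul_zero, sub_zero]
        exact hzero w hw
    exact sub_eq_zero.mp hdiff
  have hae : f =ᵐ[(volume : Measure (UnitAddCircle × UnitAddCircle × UnitAddCircle))]
      fun _ => c 0 := by
    have h1 := hf_mem.coeFn_toLp
    have h2 := Lp.coeFn_smul (c 0) (chiLp 0)
    have h3 := (chi 0).coeFn_toLp (p := 2) (𝕜 := ℂ) volume
    filter_upwards [h1, h2, h3] with x h1x h2x h3x
    have : F = (c 0 • chiLp 0 : Lp ℂ 2 volume) := hF
    calc f x = F x := h1x.symm
      _ = (c 0 • chiLp 0 : Lp ℂ 2 volume) x := by rw [this]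
      _ = c 0 • (chiLp 0 : Lp ℂ 2 volume) x := by rw [h2x]; rfl
      _ = c 0 • chi 0 x := by rw [h3x]
      _ = c 0 := by
          rw [chi_zero]
          simp
  -- conclude
  rw [Filter.eventuallyConst_set']
  by_cases hc0 : c 0 = 0
  · left
    rw [Filter.eventuallyEq_set]
    filter_upwards [hae] with x hx
    simp only [Set.mem_empty_iff_false, iff_false]
    intro hxs
    rw [hf_def, Set.indicator_of_mem hxs, Pi.one_apply, hc0] at hx
    exact one_ne_zero hx
  · right
    rw [Filter.eventuallyEq_set]
    filter_upwards [hae] with x hx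
    simp only [Set.mem_univ, iff_true]
    by_contra hxs
    rw [hf_def, Set.indicator_of_notMem hxs] at hx
    exact hc0 hx.symm
end

section
/- Let F : S¹ × Y → ℝ be continuous and h : S¹ → Maps(Y) continuous, such that |∫₀¹ F(s, h(t)^{-1}y) dt| < ε/3 for all s ∈ S¹ and y ∈ Y. Then for every integer M ≥ 1 sufficiently large (M > N where N is the modulus of continuity parameter with |F(t',y) − F(t'',y)| < ε/9 for |t'−t''| < 1/N), the rescaled loop g(t) = h(Mt) satisfies |∫₀¹ F(t, g(t)^{-1}y) dt| < ε for all y ∈ Y. -/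
open MeasureTheory

/-- Step 4 of Section 5.1: if the averaged integrals of `F(s, h(t)⁻¹ y)` are
`< ε/3` for all `s`, then for any sufficiently large `M` (exceeding the
modulus-of-continuity parameter `N`) the rescaled loop `g(t) = h(Mt)`
satisfies `|∫₀¹ F(t, g(t)⁻¹ y) dt| < ε`. -/
theorem rescaled_loop_bound {Y : Type*} [TopologicalSpace Y] [CompactSpace Y]
    (F : UnitAddCircle × Y → ℝ) (hF : Continuous F)
    (h : ℝ → Y ≃ Y) (hh : Continuous fun p : ℝ × Y => (h p.1).symm p.2)
    (hper : ∀ t : ℝ, h (t + 1) = h t)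
    (N : ℕ) (hN : 0 < N) (ε : ℝ) (hε : 0 < ε)
    (hcont : ∀ (t' t'' : ℝ) (y : Y), |t' - t''| < 1 / N →
      |F ((t' : ℝ), y) - F ((t'' : ℝ), y)| < ε / 9)
    (havg : ∀ (s : ℝ) (y : Y),
      |∫ t in (0 : ℝ)..1, F ((s : ℝ), (h t).symm y)| < ε / 3)
    (M : ℕ) (hM : N < M) :
    ∀ y : Y, |∫ t in (0 : ℝ)..1, F ((t : ℝ), (h (M * t)).symm y)| < ε := by
  intro y
  have hM0 : 0 < M := hN.trans hM
  have hMr : (0:ℝ) < (M:ℝ) := by exact_mod_cast hM0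
  have hMne : (M:ℝ) ≠ 0 := ne_of_gt hMr
  have hcoe : Continuous (fun t : ℝ => (t : UnitAddCircle)) := continuous_quotient_mk'
  have hG : Continuous fun t : ℝ => F ((t : ℝ), (h ((M:ℝ) * t)).symm y) :=
    hF.comp (hcoe.prodMk (hh.comp ((continuous_const.mul continuous_id).prodMk continuous_const)))
  have hGs : ∀ s : ℝ, Continuous fun t : ℝ => F ((s : ℝ), (h t).symm y) := fun s =>
    hF.comp (continuous_const.prodMk (hh.comp (continuous_id.prodMk continuous_const)))
  have hGsM : ∀ s : ℝ, Continuous fun t : ℝ => F ((s : ℝ), (h ((M:ℝ) * t)).symm y) := fun s =>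
    hF.comp (continuous_const.prodMk
      (hh.comp ((continuous_const.mul continuous_id).prodMk continuous_const)))
  -- bound on each piece
  have key : ∀ i : ℕ, i < M →
      |∫ t in ((i:ℝ)/M)..(((i:ℕ)+1:ℕ):ℝ)/M, F ((t : ℝ), (h ((M:ℝ) * t)).symm y)|
        ≤ ε/(3*M) + ε/(9*M) := by
    intro i hi
    set a : ℝ := (i:ℝ)/M with ha
    set b : ℝ := (((i:ℕ)+1:ℕ):ℝ)/M with hb
    have hab : a < b := by
      rw [ha, hb, div_lt_div_iff_of_pos_right hMr]
      push_cast; linarith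
    have hba : b - a = 1/(M:ℝ) := by rw [ha, hb]; push_cast; field_simp; ring
    -- the frozen integral
    have hMa : (M:ℝ) * a = (i:ℝ) := by rw [ha]; field_simp
    have hMb : (M:ℝ) * b = (i:ℝ) + 1 := by rw [hb]; push_cast; field_simp
    have hperiodic : Function.Periodic (fun u : ℝ => F ((a : ℝ), (h u).symm y)) 1 := by
      intro u; simp [hper u]
    have hA : (∫ t in a..b, F ((a : ℝ), (h ((M:ℝ) * t)).symm y))
        = ((M:ℝ))⁻¹ • ∫ u in (0:ℝ)..1, F ((a : ℝ), (h u).symm y) := by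
      rw [intervalIntegral.integral_comp_mul_left (fun u => F ((a : ℝ), (h u).symm y)) hMne,
        hMa, hMb]
      congr 1
      simpa using hperiodic.intervalIntegral_add_eq (i:ℝ) 0
    have hAbound : |∫ t in a..b, F ((a : ℝ), (h ((M:ℝ) * t)).symm y)| ≤ ε/(3*M) := by
      rw [hA, smul_eq_mul, abs_mul, abs_inv, abs_of_pos hMr]
      have := (havg a y).le
      calc ((M:ℝ))⁻¹ * |∫ u in (0:ℝ)..1, F ((a : ℝ), (h u).symm y)|
          ≤ ((M:ℝ))⁻¹ * (ε/3) := by gcongr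
        _ = ε/(3*M) := by rw [inv_mul_eq_div, div_div]
    -- the error term
    have hint1 : IntervalIntegrable (fun t => F ((t : ℝ), (h ((M:ℝ) * t)).symm y)) volume a b :=
      hG.intervalIntegrable a b
    have hint2 : IntervalIntegrable (fun t => F ((a : ℝ), (h ((M:ℝ) * t)).symm y)) volume a b :=
      (hGsM a).intervalIntegrable a b
    have hErr : |∫ t in a..b,
        (F ((t : ℝ), (h ((M:ℝ) * t)).symm y) - F ((a : ℝ), (h ((M:ℝ) * t)).symm y))|
        ≤ ε/(9*M) := by
      have hbound : ∀ t ∈ Set.uIoc a b,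
          ‖F ((t : ℝ), (h ((M:ℝ) * t)).symm y) - F ((a : ℝ), (h ((M:ℝ) * t)).symm y)‖ ≤ ε/9 := by
        intro t ht
        rw [Set.uIoc_of_le hab.le] at ht
        have h1 : |t - a| < 1/(N:ℝ) := by
          rw [abs_of_pos (by linarith [ht.1])]
          have h2 : t - a ≤ 1/(M:ℝ) := by rw [← hba]; linarith [ht.2]
          have h3 : 1/(M:ℝ) < 1/(N:ℝ) := by
            apply one_div_lt_one_div_of_lt
            · exact_mod_cast hN
            · exact_mod_cast hM
          linarith
        exact (hcont t a _ h1).le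
      calc |∫ t in a..b, (F ((t : ℝ), (h ((M:ℝ) * t)).symm y)
              - F ((a : ℝ), (h ((M:ℝ) * t)).symm y))|
          ≤ ε/9 * |b - a| := intervalIntegral.norm_integral_le_of_norm_le_const hbound
        _ = ε/(9*M) := by rw [hba, abs_of_pos (by positivity), div_mul_div_comm, mul_one]
    have hsplit : (∫ t in a..b, F ((t : ℝ), (h ((M:ℝ) * t)).symm y))
        = (∫ t in a..b, F ((a : ℝ), (h ((M:ℝ) * t)).symm y))
          + ∫ t in a..b, (F ((t : ℝ), (h ((M:ℝ) * t)).symm y)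
            - F ((a : ℝ), (h ((M:ℝ) * t)).symm y)) := by
      rw [intervalIntegral.integral_sub hint1 hint2]; ring
    rw [hsplit]
    calc |_ + _| ≤ _ + _ := abs_add_le _ _
      _ ≤ ε/(3*M) + ε/(9*M) := add_le_add hAbound hErr
  -- sum the pieces
  have hsum : ∑ i ∈ Finset.range M,
      (∫ t in ((i:ℝ)/M)..(((i:ℕ)+1:ℕ):ℝ)/M, F ((t : ℝ), (h ((M:ℝ) * t)).symm y))
      = ∫ t in (((0:ℕ):ℝ)/M)..(((M:ℕ):ℝ)/M), F ((t : ℝ), (h ((M:ℝ) * t)).symm y) :=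
    intervalIntegral.sum_integral_adjacent_intervals (a := fun i => (i:ℝ)/M)
      (fun k _ => hG.intervalIntegrable _ _)
  have h01 : (((0:ℕ):ℝ)/M) = (0:ℝ) := by simp
  have h02 : (((M:ℕ):ℝ)/M) = (1:ℝ) := by field_simp
  rw [h01, h02] at hsum
  have : (∫ t in (0:ℝ)..1, F ((t : ℝ), (h ((M:ℝ) * t)).symm y)) =
      ∑ i ∈ Finset.range M,
      (∫ t in ((i:ℝ)/M)..(((i:ℕ)+1:ℕ):ℝ)/M, F ((t : ℝ), (h ((M:ℝ) * t)).symm y)) := hsum.symm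
  rw [this]
  calc |∑ i ∈ Finset.range M, _| ≤ ∑ i ∈ Finset.range M,
        |∫ t in ((i:ℝ)/M)..(((i:ℕ)+1:ℕ):ℝ)/M, F ((t : ℝ), (h ((M:ℝ) * t)).symm y)| :=
        Finset.abs_sum_le_sum_abs _ _
    _ ≤ ∑ i ∈ Finset.range M, (ε/(3*M) + ε/(9*M)) :=
        Finset.sum_le_sum fun i hi => key i (Finset.mem_range.mp hi)
    _ = M * (ε/(3*M) + ε/(9*M)) := by rw [Finset.sum_const, Finset.card_range, nsmul_eq_mul]
    _ = ε/3 + ε/9 := by field_simp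
    _ < ε := by linarith
end
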